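/- Let m > 1 be an integer with 3 ∤ m, and let E'_m be the elliptic curve over ℚ defined by y² = x³ + x - m⁶. Let A and B be rational points on E'_m, and suppose the x-coordinate of A equals a^i, where a > 1 is an integer not divisible by 3 and i is an even positive integer. Then A ≠ 2B. -/

import Mathlib

private lemma zmod3_no_sol : ∀ s t : ZMod 3,
    ¬(t ^ 2 = s ^ 3 + s - 1 ∧ 4 * t ^ 2 = s ^ 4 - 2 * s ^ 2 + 8 * s + 1) := by decide

private lemma zmod3_sq (z : ZMod 3) (hz : z ≠ 0) : z ^ 2 = 1 := by revert z hz; decide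

private lemma key_contradiction (m a : ℤ) (h3 : ¬ (3 : ℤ) ∣ m) (ha3 : ¬ (3 : ℤ) ∣ a)
    (i : ℕ) (hi : Even i) (x₀ y₀ : ℚ)
    (he : y₀ ^ 2 = x₀ ^ 3 + x₀ - (m : ℚ) ^ 6)
    (hk : 4 * y₀ ^ 2 * (a : ℚ) ^ i = x₀ ^ 4 - 2 * x₀ ^ 2 + 8 * (m : ℚ) ^ 6 * x₀ + 1) :
    False := by
  haveI : Fact (Nat.Prime 3) := ⟨by norm_num⟩
  set u : ℚ_[3] := (x₀ : ℚ_[3]) with hu_def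
  set v : ℚ_[3] := (y₀ : ℚ_[3]) with hv_def
  have he' : v ^ 2 = u ^ 3 + u - (m : ℚ_[3]) ^ 6 := by
    have := congrArg (fun q : ℚ => (q : ℚ_[3])) he
    push_cast at this
    exact this
  have hk' : 4 * v ^ 2 * (a : ℚ_[3]) ^ i =
      u ^ 4 - 2 * u ^ 2 + 8 * (m : ℚ_[3]) ^ 6 * u + 1 := by
    have := congrArg (fun q : ℚ => (q : ℚ_[3])) hk
    push_cast at this
    exact this
  have hna : ‖(a : ℚ_[3])‖ = 1 :=
    le_antisymm (Padic.norm_int_le_one a)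
      (le_of_not_gt (fun h => ha3 (by exact_mod_cast (Padic.norm_intCast_lt_one_iff (k := a)).mp h)))
  have hnm : ‖(m : ℚ_[3])‖ = 1 :=
    le_antisymm (Padic.norm_int_le_one m)
      (le_of_not_gt (fun h => h3 (by exact_mod_cast (Padic.norm_intCast_lt_one_iff (k := m)).mp h)))
  have hn4 : ‖(4 : ℚ_[3])‖ = 1 := by
    have : ¬ (3 : ℤ) ∣ 4 := by decide
    have h := le_antisymm (Padic.norm_int_le_one 4)
      (le_of_not_gt (fun h => this (by exact_mod_cast (Padic.norm_intCast_lt_one_iff (k := 4)).mp h)))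
    exact_mod_cast h
  have hn2 : ‖(2 : ℚ_[3])‖ = 1 := by
    have : ¬ (3 : ℤ) ∣ 2 := by decide
    have h := le_antisymm (Padic.norm_int_le_one 2)
      (le_of_not_gt (fun h => this (by exact_mod_cast (Padic.norm_intCast_lt_one_iff (k := 2)).mp h)))
    exact_mod_cast h
  have hn8 : ‖(8 : ℚ_[3])‖ = 1 := by
    have : ¬ (3 : ℤ) ∣ 8 := by decide
    have h := le_antisymm (Padic.norm_int_le_one 8)
      (le_of_not_gt (fun h => this (by exact_mod_cast (Padic.norm_intCast_lt_one_iff (k := 8)).mp h)))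
    exact_mod_cast h
  -- Step 1 : ‖u‖ ≤ 1
  have hu : ‖u‖ ≤ 1 := by
    by_contra hgt
    push_neg at hgt
    have hsub : 4 * (u ^ 3 + u - (m : ℚ_[3]) ^ 6) * (a : ℚ_[3]) ^ i =
        u ^ 4 - 2 * u ^ 2 + 8 * (m : ℚ_[3]) ^ 6 * u + 1 := by rw [← he']; exact hk'
    have hcu : ‖(m : ℚ_[3]) ^ 6‖ = 1 := by rw [norm_pow, hnm]; norm_num
    have h1 : ‖u - (m : ℚ_[3]) ^ 6‖ ≤ ‖u‖ := by
      have := Padic.nonarchimedean u (-(m : ℚ_[3]) ^ 6)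
      rw [norm_neg, hcu] at this
      calc ‖u - (m : ℚ_[3]) ^ 6‖ = ‖u + -(m : ℚ_[3]) ^ 6‖ := by ring_nf
        _ ≤ max ‖u‖ 1 := this
        _ ≤ ‖u‖ := max_le le_rfl (le_of_lt hgt)
    have h0 : (0 : ℝ) < ‖u‖ := lt_trans one_pos hgt
    have hlt3 : ‖u‖ < ‖u‖ ^ 3 := by
      nlinarith [mul_pos (mul_pos h0 (sub_pos.mpr hgt)) (show (0:ℝ) < ‖u‖ + 1 by linarith)]
    have hLHS : ‖u ^ 3 + u - (m : ℚ_[3]) ^ 6‖ = ‖u‖ ^ 3 := by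
      have hne : ‖u ^ 3‖ ≠ ‖u - (m : ℚ_[3]) ^ 6‖ := by
        rw [norm_pow]; exact ne_of_gt (lt_of_le_of_lt h1 hlt3)
      calc ‖u ^ 3 + u - (m : ℚ_[3]) ^ 6‖ = ‖u ^ 3 + (u - (m : ℚ_[3]) ^ 6)‖ := by ring_nf
        _ = max ‖u ^ 3‖ ‖u - (m : ℚ_[3]) ^ 6‖ := Padic.add_eq_max_of_ne hne
        _ = ‖u‖ ^ 3 := by
            rw [max_eq_left, norm_pow]
            rw [norm_pow]; exact le_of_lt (lt_of_le_of_lt h1 hlt3)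
    have hrest : ‖-2 * u ^ 2 + 8 * (m : ℚ_[3]) ^ 6 * u + 1‖ ≤ ‖u‖ ^ 2 := by
      have ht1 : ‖-2 * u ^ 2‖ ≤ ‖u‖ ^ 2 := by
        rw [norm_mul, norm_neg, hn2, one_mul, norm_pow]
      have ht2 : ‖8 * (m : ℚ_[3]) ^ 6 * u‖ ≤ ‖u‖ ^ 2 := by
        rw [norm_mul, norm_mul, hn8, hcu, one_mul, one_mul]
        nlinarith [norm_nonneg u]
      have ht3 : ‖(1 : ℚ_[3])‖ ≤ ‖u‖ ^ 2 := by
        rw [norm_one]; nlinarith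
      calc ‖-2 * u ^ 2 + 8 * (m : ℚ_[3]) ^ 6 * u + 1‖
          ≤ max ‖-2 * u ^ 2 + 8 * (m : ℚ_[3]) ^ 6 * u‖ ‖(1 : ℚ_[3])‖ :=
            Padic.nonarchimedean _ _
        _ ≤ max (max ‖-2 * u ^ 2‖ ‖8 * (m : ℚ_[3]) ^ 6 * u‖) ‖(1 : ℚ_[3])‖ :=
            max_le_max (Padic.nonarchimedean _ _) le_rfl
        _ ≤ ‖u‖ ^ 2 := max_le (max_le ht1 ht2) ht3
    have hlt4 : ‖u‖ ^ 2 < ‖u‖ ^ 4 := by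
      nlinarith [mul_pos (mul_pos h0 h0) (show (0:ℝ) < ‖u‖ ^ 2 - 1 by nlinarith)]
    have hRHS : ‖u ^ 4 - 2 * u ^ 2 + 8 * (m : ℚ_[3]) ^ 6 * u + 1‖ = ‖u‖ ^ 4 := by
      have hne : ‖u ^ 4‖ ≠ ‖-2 * u ^ 2 + 8 * (m : ℚ_[3]) ^ 6 * u + 1‖ := by
        rw [norm_pow]; exact ne_of_gt (lt_of_le_of_lt hrest hlt4)
      calc ‖u ^ 4 - 2 * u ^ 2 + 8 * (m : ℚ_[3]) ^ 6 * u + 1‖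
          = ‖u ^ 4 + (-2 * u ^ 2 + 8 * (m : ℚ_[3]) ^ 6 * u + 1)‖ := by ring_nf
        _ = max ‖u ^ 4‖ ‖-2 * u ^ 2 + 8 * (m : ℚ_[3]) ^ 6 * u + 1‖ :=
            Padic.add_eq_max_of_ne hne
        _ = ‖u‖ ^ 4 := by
            rw [max_eq_left, norm_pow]
            rw [norm_pow]; exact le_of_lt (lt_of_le_of_lt hrest hlt4)
    have := congrArg (fun q : ℚ_[3] => ‖q‖) hsub
    simp only [norm_mul, norm_pow, hna, hn4] at this
    rw [one_pow, mul_one, one_mul] at this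
    rw [hLHS] at this
    rw [hRHS] at this
    have h34 : ‖u‖ ^ 3 < ‖u‖ ^ 4 := by
      nlinarith [mul_pos (mul_pos (mul_pos h0 h0) h0) (sub_pos.mpr hgt)]
    linarith
  -- Step 2: ‖v‖ ≤ 1
  have hv : ‖v‖ ≤ 1 := by
    have h2 : ‖v‖ ^ 2 ≤ 1 := by
      rw [← norm_pow, he']
      have hcu : ‖(m : ℚ_[3]) ^ 6‖ ≤ 1 := by rw [norm_pow, hnm]; norm_num
      have h1 : ‖u ^ 3 + u‖ ≤ 1 := le_trans (Padic.nonarchimedean _ _)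
        (max_le (by rw [norm_pow]; exact pow_le_one₀ (norm_nonneg u) hu) hu)
      calc ‖u ^ 3 + u - (m : ℚ_[3]) ^ 6‖ = ‖(u ^ 3 + u) + -(m : ℚ_[3]) ^ 6‖ := by ring_nf
        _ ≤ max ‖u ^ 3 + u‖ ‖-(m : ℚ_[3]) ^ 6‖ := Padic.nonarchimedean _ _
        _ ≤ 1 := max_le h1 (by rw [norm_neg]; exact hcu)
    nlinarith [norm_nonneg v]
  -- Step 3: lift to ℤ_[3] and reduce mod 3
  set U : ℤ_[3] := ⟨u, hu⟩ with hU_def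
  set V : ℤ_[3] := ⟨v, hv⟩ with hV_def
  have hE : V ^ 2 = U ^ 3 + U - (m : ℤ_[3]) ^ 6 := by
    apply Subtype.ext
    push_cast
    exact he'
  have hK : 4 * V ^ 2 * (a : ℤ_[3]) ^ i =
      U ^ 4 - 2 * U ^ 2 + 8 * (m : ℤ_[3]) ^ 6 * U + 1 := by
    apply Subtype.ext
    push_cast
    exact hk'
  set f := (PadicInt.toZMod : ℤ_[3] →+* ZMod 3) with hf_def
  have hE' : f V ^ 2 = f U ^ 3 + f U - (m : ZMod 3) ^ 6 := by
    have := congrArg f hE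
    push_cast at this
    simpa using this
  have hK' : 4 * f V ^ 2 * (a : ZMod 3) ^ i =
      f U ^ 4 - 2 * f U ^ 2 + 8 * (m : ZMod 3) ^ 6 * f U + 1 := by
    have := congrArg f hK
    simp only [map_mul, map_add, map_sub, map_pow, map_one, map_ofNat, map_intCast] at this
    exact this
  have ham : (a : ZMod 3) ≠ 0 := fun h =>
    ha3 (by exact_mod_cast (ZMod.intCast_zmod_eq_zero_iff_dvd a 3).mp h)
  have hmm : (m : ZMod 3) ≠ 0 := fun h =>
    h3 (by exact_mod_cast (ZMod.intCast_zmod_eq_zero_iff_dvd m 3).mp h)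
  have hapow : (a : ZMod 3) ^ i = 1 := by
    obtain ⟨k, hk⟩ := hi
    rw [hk, ← two_mul, pow_mul, zmod3_sq _ ham, one_pow]
  have hmpow : (m : ZMod 3) ^ 6 = 1 := by
    have : (6 : ℕ) = 2 * 3 := by norm_num
    rw [this, pow_mul, zmod3_sq _ hmm, one_pow]
  rw [hapow, hmpow, mul_one] at hK'
  rw [hmpow] at hE'
  exact zmod3_no_sol (f U) (f V) ⟨hE', hK'⟩

/-- The elliptic curve `E'_m : y² = x³ + x - m⁶` over `ℚ`. -/
def Em' (m : ℤ) : WeierstrassCurve ℚ := ⟨0, 0, 0, 1, -(m : ℚ) ^ 6⟩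

/-- Let `m > 1` be an integer with `3 ∤ m`, and let `A`, `B` be rational points on
`E'_m : y² = x³ + x - m⁶`. If `x(A) = aⁱ` where `a > 1` is an integer with `3 ∤ a` and `i` is
an even positive integer, then `A ≠ 2B`. -/
theorem Em'_even_power_x_not_double
    (m : ℤ) (hm : 1 < m) (h3 : ¬ (3 : ℤ) ∣ m)
    (a : ℤ) (ha : 1 < a) (ha3 : ¬ (3 : ℤ) ∣ a)
    (i : ℕ) (hi : Even i) (hipos : 0 < i)
    (x y x₀ y₀ : ℚ) (hx : x = (a : ℚ) ^ i)
    (hA : (Em' m).toAffine.Nonsingular x y)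
    (hB : (Em' m).toAffine.Nonsingular x₀ y₀) :
    WeierstrassCurve.Affine.Point.some _ _ hA ≠ 2 • WeierstrassCurve.Affine.Point.some _ _ hB := by
  intro hcontra
  rw [two_smul] at hcontra
  have ha₁ : (Em' m).toAffine.a₁ = 0 := rfl
  have ha₂ : (Em' m).toAffine.a₂ = 0 := rfl
  have ha₃ : (Em' m).toAffine.a₃ = 0 := rfl
  have ha₄ : (Em' m).toAffine.a₄ = 1 := rfl
  have ha₆ : (Em' m).toAffine.a₆ = -(m : ℚ) ^ 6 := rfl
  have hnegY : (Em' m).toAffine.negY x₀ y₀ = -y₀ := by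
    rw [WeierstrassCurve.Affine.negY, ha₁, ha₃]; ring
  by_cases hy : y₀ = (Em' m).toAffine.negY x₀ y₀
  · rw [WeierstrassCurve.Affine.Point.add_of_Y_eq rfl hy] at hcontra
    exact WeierstrassCurve.Affine.Point.some_ne_zero hA hcontra
  · rw [WeierstrassCurve.Affine.Point.add_of_Y_ne hy] at hcontra
    have hy0 : y₀ ≠ 0 := by
      intro h; apply hy; rw [hnegY, h, neg_zero]
    have hxeq : x = (Em' m).toAffine.addX x₀ x₀ ((Em' m).toAffine.slope x₀ x₀ y₀ y₀) := by
      injection hcontra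
    rw [WeierstrassCurve.Affine.slope_of_Y_ne rfl hy] at hxeq
    rw [WeierstrassCurve.Affine.addX, hnegY, ha₁, ha₂, ha₄] at hxeq
    have he : y₀ ^ 2 = x₀ ^ 3 + x₀ - (m : ℚ) ^ 6 := by
      have := hB.1
      rw [WeierstrassCurve.Affine.equation_iff, ha₁, ha₂, ha₃, ha₄, ha₆] at this
      linarith [this]
    have hk : 4 * y₀ ^ 2 * (a : ℚ) ^ i = x₀ ^ 4 - 2 * x₀ ^ 2 + 8 * (m : ℚ) ^ 6 * x₀ + 1 := by
      rw [hx] at hxeq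
      have h2y : (y₀ + y₀) ≠ 0 := fun h => hy0 (by linarith)
      have key : ((a : ℚ) ^ i + 2 * x₀) * (y₀ + y₀) ^ 2 = (3 * x₀ ^ 2 + 1) ^ 2 := by
        rw [hxeq]
        field_simp
        ring
      linear_combination key - 8 * x₀ * he
    exact key_contradiction m a h3 ha3 i hi x₀ y₀ he hk
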